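/- arXiv:2501.09189 — 3 statements merged into one kernel-verified Lean document; each statement's English description precedes it below -/
import Mathlib

section
/- Let d, k ≥ 1, B > 0, ε > 0, let 𝒞 be a finite partition of ℝ^d into Borel sets, and let S be a nonempty finite tuple of points of ℝ^d. Suppose that for every A ∈ 𝒞 and every monomial m(x) = ∏_j x_j^{α_j} of total degree at most k, |E_{x∼S}[m(x)·1_A(x)] − E_{x∼N(0,I_d)}[m(x)·1_A(x)]| ≤ ε/((d+1)^k · |𝒞| · B). Then for every measurable function f : ℝ^d → {0,1} that has (ν, B)-sandwiching degree at most k in L1 norm under N(0,I_d) with respect to 𝒞, one has |Pr_{x∼S}[f(x)=1] − Pr_{x∼N(0,I_d)}[f(x)=1]| ≤ ν + 2ε. -/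
open MeasureTheory ProbabilityTheory Real
open scoped ENNReal

noncomputable section

/-- The standard Gaussian measure `N(0, I_d)` on `ℝ^d`. -/
def stdGaussian (d : ℕ) : Measure (Fin d → ℝ) := Measure.pi fun _ => gaussianReal 0 1

/-- Number of entries of the tuple `S` satisfying `P` (with multiplicity). -/
def cnt {N : ℕ} {α : Type*} (S : Fin N → α) (P : α → Prop) : ℕ :=
  Nat.card {i : Fin N // P (S i)}

/-- Fraction of entries of the tuple `S` satisfying `P` (with multiplicity). -/
def frac {N : ℕ} {α : Type*} (S : Fin N → α) (P : α → Prop) : ℝ :=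
  (cnt S P : ℝ) / N

/-- Average of `g` over the entries of the tuple `S` (with multiplicity). -/
def avg {N : ℕ} {α : Type*} (S : Fin N → α) (g : α → ℝ) : ℝ :=
  (∑ i, g (S i)) / N

/-- `f` has `(ν, B)`-sandwiching degree at most `k` in `L1` norm under `N(0, I_d)` with
respect to the partition `𝒞`: there are, for each `A ∈ 𝒞`, polynomials `p_down^A, p_up^A`
of degree at most `k` with coefficients bounded by `B`, such that
`Σ_A p_down^A·1_A ≤ f ≤ Σ_A p_up^A·1_A` pointwise and
`E_{N(0,I_d)}[Σ_A (p_up^A - p_down^A)·1_A] ≤ ν`. -/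
def SandwichL1 {d : ℕ} (𝒞 : Finset (Set (Fin d → ℝ))) (f : (Fin d → ℝ) → ℝ)
    (k : ℕ) (ν B : ℝ) : Prop :=
  ∃ pd pu : Set (Fin d → ℝ) → MvPolynomial (Fin d) ℝ,
    (∀ A ∈ 𝒞, (pd A).totalDegree ≤ k ∧ (pu A).totalDegree ≤ k ∧
      (∀ m, |(pd A).coeff m| ≤ B) ∧ (∀ m, |(pu A).coeff m| ≤ B)) ∧
    (∀ x, (∑ A ∈ 𝒞, Set.indicator A (fun y => MvPolynomial.eval y (pd A)) x) ≤ f x ∧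
      f x ≤ ∑ A ∈ 𝒞, Set.indicator A (fun y => MvPolynomial.eval y (pu A)) x) ∧
    (∫ x, (∑ A ∈ 𝒞, Set.indicator A
        (fun y => MvPolynomial.eval y (pu A) - MvPolynomial.eval y (pd A)) x)
      ∂(stdGaussian d)) ≤ ν

/-! ### Auxiliary lemmas -/

section Aux

lemma integrable_pow_gaussian (n : ℕ) :
    Integrable (fun y : ℝ => y ^ n) (gaussianReal 0 1) := by
  rw [gaussianReal_of_var_ne_zero _ one_ne_zero, integrable_withDensity_iff
    (measurable_gaussianPDF _ _) (Filter.Eventually.of_forall fun x => ENNReal.ofReal_lt_top)]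
  have key : Integrable (fun x : ℝ => x ^ n * rexp (-(2⁻¹) * x ^ 2)) volume := by
    have := integrable_rpow_mul_exp_neg_mul_sq (b := 2⁻¹) (by norm_num) (s := (n : ℝ))
      (lt_of_lt_of_le (by norm_num) (Nat.cast_nonneg n))
    simpa [Real.rpow_natCast] using this
  refine (key.abs.const_mul ((√(2 * π * 1))⁻¹)).mono'
    ?_ (Filter.Eventually.of_forall fun x => ?_)
  · exact ((measurable_id.pow_const n).mul
      ((measurable_gaussianPDF 0 1).ennreal_toReal)).aestronglyMeasurable
  · rw [gaussianPDF, ENNReal.toReal_ofReal (gaussianPDFReal_nonneg _ _ _), gaussianPDFReal]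
    simp only [NNReal.coe_one, mul_one, sub_zero]
    have h1 : -x ^ 2 / 2 = -(2⁻¹) * x ^ 2 := by ring
    simp only [Real.norm_eq_abs, abs_mul, abs_of_nonneg (Real.exp_nonneg _),
      abs_of_nonneg (by positivity : (0:ℝ) ≤ (√(2 * π))⁻¹), h1]
    apply le_of_eq
    ring

lemma integrable_monomial_gaussian (d : ℕ) (α : Fin d → ℕ) :
    Integrable (fun y : Fin d → ℝ => ∏ j, y j ^ α j) (stdGaussian d) := by
  letI : MeasureSpace ℝ := ⟨gaussianReal 0 1⟩
  haveI : SigmaFinite (volume : Measure ℝ) :=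
    (inferInstance : SigmaFinite (gaussianReal 0 1))
  exact Integrable.fintype_prod (f := fun j (y : ℝ) => y ^ α j)
    (fun j => integrable_pow_gaussian (α j))

variable {d k : ℕ}

/-- membership in a downward-closed finset of `Fin d` is equivalent to being below its card. -/
lemma mem_downclosed_iff {s : Finset (Fin d)}
    (hdc : ∀ a b : Fin d, a ≤ b → b ∈ s → a ∈ s) (j : Fin d) :
    j ∈ s ↔ (j : ℕ) < s.card := by
  constructor
  · intro hj
    have hsub : Finset.Iic j ⊆ s := fun a ha => hdc a j (Finset.mem_Iic.mp ha) hj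
    have := Finset.card_le_card hsub
    rw [Fin.card_Iic] at this
    omega
  · intro hj
    by_contra hjs
    have hsub : s ⊆ Finset.Iio j := by
      intro b hb
      rw [Finset.mem_Iio]
      by_contra hbj
      exact hjs (hdc j b (le_of_not_gt hbj) hb)
    have := Finset.card_le_card hsub
    rw [Fin.card_Iio] at this
    omega

lemma card_filter_le_coe (c : ℕ) (hc : c ≤ k) :
    (Finset.univ.filter fun t : Fin k => c ≤ (t : ℕ)).card = k - c := by
  rcases eq_or_lt_of_le hc with h | h
  · subst h
    rw [Finset.filter_false_of_mem (fun t _ => by omega), Finset.card_empty]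
    omega
  · have : (Finset.univ.filter fun t : Fin k => c ≤ (t : ℕ)) = Finset.Ici ⟨c, h⟩ := by
      ext t
      simp [Fin.le_def]
    rw [this, Fin.card_Ici]

/-- The encoding of a multi-exponent of total degree at most `k` as a
function `Fin k → Fin (d+1)`. -/
def enc (k : ℕ) (m : Fin d →₀ ℕ) : Fin k → Fin (d + 1) := fun t =>
  ⟨(Finset.univ.filter fun j : Fin d => ∑ i ∈ Finset.Iic j, m i ≤ (t : ℕ)).card,
    lt_of_le_of_lt (le_trans (Finset.card_filter_le _ _) (by simp)) (Nat.lt_succ_self d)⟩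

lemma enc_injOn : Set.InjOn (enc (d := d) k) {m | (∑ j, m j) ≤ k} := by
  intro m hm m' hm' hFe
  have hdc : ∀ (μ : Fin d →₀ ℕ) (t : ℕ) (a b : Fin d), a ≤ b →
      b ∈ (Finset.univ.filter fun j : Fin d => ∑ i ∈ Finset.Iic j, μ i ≤ t) →
      a ∈ (Finset.univ.filter fun j : Fin d => ∑ i ∈ Finset.Iic j, μ i ≤ t) := by
    intro μ t a b hab hb
    rw [Finset.mem_filter] at hb ⊢
    exact ⟨Finset.mem_univ _, le_trans (Finset.sum_le_sum_of_subset
      (Finset.Iic_subset_Iic.mpr hab)) hb.2⟩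
  have hcum : ∀ (μ : Fin d →₀ ℕ), (∑ j, μ j) ≤ k → ∀ j : Fin d,
      ∑ i ∈ Finset.Iic j, μ i ≤ k := by
    intro μ hμ j
    exact le_trans (Finset.sum_le_sum_of_subset (Finset.subset_univ _)) hμ
  have hrec : ∀ (μ : Fin d →₀ ℕ), (∑ j, μ j) ≤ k → ∀ j : Fin d,
      (Finset.univ.filter fun t : Fin k => (j : ℕ) < (enc k μ t : ℕ)).card
        = k - ∑ i ∈ Finset.Iic j, μ i := by
    intro μ hμ j
    have : (Finset.univ.filter fun t : Fin k => (j : ℕ) < (enc k μ t : ℕ))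
        = Finset.univ.filter fun t : Fin k => (∑ i ∈ Finset.Iic j, μ i) ≤ (t : ℕ) := by
      apply Finset.filter_congr
      intro t _
      simp only [enc]
      rw [← mem_downclosed_iff (hdc μ t), Finset.mem_filter]
      simp
    rw [this, card_filter_le_coe _ (hcum μ hμ j)]
  have hcums : ∀ j : Fin d, ∑ i ∈ Finset.Iic j, m i = ∑ i ∈ Finset.Iic j, m' i := by
    intro j
    have h1 := hrec m hm j
    have h2 := hrec m' hm' j
    rw [hFe] at h1
    have := hcum m hm j
    have := hcum m' hm' j
    omega
  ext j
  have key : ∀ n : ℕ, ∀ j : Fin d, (j : ℕ) = n → m j = m' j := by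
    intro n
    induction n using Nat.strong_induction_on with
    | _ n IH =>
      intro j hj
      have hio : ∑ i ∈ Finset.Iio j, m i = ∑ i ∈ Finset.Iio j, m' i := by
        apply Finset.sum_congr rfl
        intro i hi
        rw [Finset.mem_Iio] at hi
        exact IH (i : ℕ) (by rw [← hj]; exact Fin.lt_def.mp hi) i rfl
      have h := hcums j
      rw [← Finset.Iio_insert, Finset.sum_insert (by simp),
        Finset.sum_insert (by simp)] at h
      omega
  exact key (j : ℕ) j rfl

lemma support_card_le (p : MvPolynomial (Fin d) ℝ) (hp : p.totalDegree ≤ k) :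
    p.support.card ≤ (d + 1) ^ k := by
  have hmem : ∀ m ∈ p.support, (∑ j, m j) ≤ k := by
    intro m hm
    have h1 : (m.sum fun _ e => e) ≤ p.totalDegree := MvPolynomial.le_totalDegree hm
    have h2 : (m.sum fun _ e => e) = ∑ j, m j := Finsupp.sum_fintype _ _ (fun _ => rfl)
    omega
  have hinj : Set.InjOn (enc (d := d) k) p.support := fun a ha b hb h =>
    enc_injOn (hmem a ha) (hmem b hb) h
  calc p.support.card ≤ (Finset.univ : Finset (Fin k → Fin (d + 1))).card :=
        Finset.card_le_card_of_injOn _ (fun _ _ => Finset.mem_univ _) hinj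
    _ = (d + 1) ^ k := by simp [Fintype.card_fun]

lemma avg_sum {N : ℕ} {α β : Type*} (S : Fin N → α) (T : Finset β) (g : β → α → ℝ) :
    avg S (fun x => ∑ m ∈ T, g m x) = ∑ m ∈ T, avg S (g m) := by
  unfold avg
  rw [Finset.sum_comm, Finset.sum_div]

lemma avg_const_mul {N : ℕ} {α : Type*} (S : Fin N → α) (c : ℝ) (g : α → ℝ) :
    avg S (fun x => c * g x) = c * avg S g := by
  unfold avg
  rw [← Finset.mul_sum, mul_div_assoc]

lemma indicator_eval_eq (A : Set (Fin d → ℝ)) (p : MvPolynomial (Fin d) ℝ)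
    (x : Fin d → ℝ) :
    A.indicator (fun y => MvPolynomial.eval y p) x
      = ∑ m ∈ p.support, p.coeff m * A.indicator (fun y => ∏ j, y j ^ m j) x := by
  by_cases hx : x ∈ A
  · simp only [Set.indicator_of_mem hx, MvPolynomial.eval_eq']
  · simp [Set.indicator_of_notMem hx]

lemma integrable_indicator_eval {A : Set (Fin d → ℝ)} (hA : MeasurableSet A)
    (p : MvPolynomial (Fin d) ℝ) :
    Integrable (A.indicator fun y => MvPolynomial.eval y p) (stdGaussian d) := by
  have : (A.indicator fun y => MvPolynomial.eval y p)
      = fun x => ∑ m ∈ p.support, p.coeff m * A.indicator (fun y => ∏ j, y j ^ m j) x :=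
    funext (indicator_eval_eq A p)
  rw [this]
  exact integrable_finset_sum _ fun m _ =>
    ((integrable_monomial_gaussian d m).indicator hA).const_mul _

end Aux

/-- If all moments of degree at most `k` restricted to the cells of the partition `𝒞` match
those of `N(0, I_d)` up to `ε/((d+1)^k·|𝒞|·B)`, then for every `{0,1}`-valued function with
`(ν, B)`-sandwiching degree at most `k` in `L1` under `N(0, I_d)` w.r.t. `𝒞`, the sample
probability of `f = 1` matches the Gaussian probability up to `ν + 2ε`. -/
theorem sandwiching_L1_implies_fooling
    {d k : ℕ} (hd : 1 ≤ d) (hk : 1 ≤ k) (B ε ν : ℝ) (hB : 0 < B) (hε : 0 < ε)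
    (𝒞 : Finset (Set (Fin d → ℝ)))
    (hmeas : ∀ A ∈ 𝒞, MeasurableSet A)
    (hdisj : ∀ A ∈ 𝒞, ∀ A' ∈ 𝒞, A ≠ A' → Disjoint A A')
    (hcover : ⋃₀ (𝒞 : Set (Set (Fin d → ℝ))) = Set.univ)
    {N : ℕ} (hN : 0 < N) (S : Fin N → (Fin d → ℝ))
    (hmom : ∀ A ∈ 𝒞, ∀ α : Fin d → ℕ, (∑ j, α j) ≤ k →
      |avg S (Set.indicator A (fun y => ∏ j, y j ^ α j))
          - ∫ x, Set.indicator A (fun y => ∏ j, y j ^ α j) x ∂(stdGaussian d)|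
        ≤ ε / (((d : ℝ) + 1) ^ k * (𝒞.card : ℝ) * B))
    (f : (Fin d → ℝ) → ℝ) (hf01 : ∀ x, f x = 0 ∨ f x = 1) (hfmeas : Measurable f)
    (hsand : SandwichL1 𝒞 f k ν B) :
    |frac S (fun x => f x = 1) - (stdGaussian d {x | f x = 1}).toReal| ≤ ν + 2 * ε := by
  classical
  obtain ⟨pd, pu, hdeg, hsw, hL1⟩ := hsand
  -- nonemptiness of the partition
  have hcard : 0 < 𝒞.card := by
    rcases Finset.eq_empty_or_nonempty 𝒞 with h | h
    · exfalso
      have huniv : (Set.univ : Set (Fin d → ℝ)).Nonempty := Set.univ_nonempty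
      rw [← hcover] at huniv
      simp [h] at huniv
    · exact Finset.card_pos.mpr h
  have hcardR : (0:ℝ) < (𝒞.card : ℝ) := by exact_mod_cast hcard
  have hpowR : (0:ℝ) < ((d : ℝ) + 1) ^ k := by positivity
  -- per-polynomial estimate
  have hpoly : ∀ A ∈ 𝒞, ∀ p : MvPolynomial (Fin d) ℝ,
      p.totalDegree ≤ k → (∀ m, |p.coeff m| ≤ B) →
      |avg S (A.indicator fun y => MvPolynomial.eval y p)
        - ∫ x, A.indicator (fun y => MvPolynomial.eval y p) x ∂(stdGaussian d)|
        ≤ ε / (𝒞.card : ℝ) := by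
    intro A hA p hpdeg hcoeff
    have hAm := hmeas A hA
    have havg : avg S (A.indicator fun y => MvPolynomial.eval y p)
        = ∑ m ∈ p.support, p.coeff m * avg S (A.indicator fun y => ∏ j, y j ^ m j) := by
      rw [show (A.indicator fun y => MvPolynomial.eval y p)
        = fun x => ∑ m ∈ p.support, p.coeff m * A.indicator (fun y => ∏ j, y j ^ m j) x
        from funext (indicator_eval_eq A p), avg_sum]
      exact Finset.sum_congr rfl fun m _ => avg_const_mul S _ _
    have hInt : ∫ x, A.indicator (fun y => MvPolynomial.eval y p) x ∂(stdGaussian d)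
        = ∑ m ∈ p.support,
            p.coeff m * ∫ x, A.indicator (fun y => ∏ j, y j ^ m j) x ∂(stdGaussian d) := by
      simp_rw [indicator_eval_eq A p]
      have hfs := integral_finset_sum (μ := stdGaussian d) p.support
        (f := fun m x => MvPolynomial.coeff m p * A.indicator (fun y => ∏ j, y j ^ m j) x)
        (fun m _ => ((integrable_monomial_gaussian d m).indicator hAm).const_mul _)
      rw [hfs]
      exact Finset.sum_congr rfl fun m _ => integral_const_mul _ _
    rw [havg, hInt, ← Finset.sum_sub_distrib]
    have hterm : ∀ m ∈ p.support,
        |p.coeff m * avg S (A.indicator fun y => ∏ j, y j ^ m j)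
          - p.coeff m * ∫ x, A.indicator (fun y => ∏ j, y j ^ m j) x ∂(stdGaussian d)|
        ≤ B * (ε / (((d : ℝ) + 1) ^ k * (𝒞.card : ℝ) * B)) := by
      intro m hm
      rw [← mul_sub, abs_mul]
      have hdegm : (∑ j, m j) ≤ k := by
        have h1 : (m.sum fun _ e => e) ≤ p.totalDegree := MvPolynomial.le_totalDegree hm
        have h2 : (m.sum fun _ e => e) = ∑ j, m j := Finsupp.sum_fintype _ _ (fun _ => rfl)
        omega
      have h1 := hmom A hA (⇑m) hdegm
      exact mul_le_mul (hcoeff m) h1 (abs_nonneg _) hB.le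
    have hδ : 0 ≤ B * (ε / (((d : ℝ) + 1) ^ k * (𝒞.card : ℝ) * B)) := by positivity
    calc |∑ m ∈ p.support, (p.coeff m * avg S (A.indicator fun y => ∏ j, y j ^ m j)
            - p.coeff m * ∫ x, A.indicator (fun y => ∏ j, y j ^ m j) x ∂(stdGaussian d))|
        ≤ ∑ m ∈ p.support, |p.coeff m * avg S (A.indicator fun y => ∏ j, y j ^ m j)
            - p.coeff m * ∫ x, A.indicator (fun y => ∏ j, y j ^ m j) x ∂(stdGaussian d)| :=
          Finset.abs_sum_le_sum_abs _ _
      _ ≤ ∑ _m ∈ p.support, B * (ε / (((d : ℝ) + 1) ^ k * (𝒞.card : ℝ) * B)) :=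
          Finset.sum_le_sum hterm
      _ = (p.support.card : ℝ) * (B * (ε / (((d : ℝ) + 1) ^ k * (𝒞.card : ℝ) * B))) := by
          rw [Finset.sum_const, nsmul_eq_mul]
      _ ≤ ((d : ℝ) + 1) ^ k * (B * (ε / (((d : ℝ) + 1) ^ k * (𝒞.card : ℝ) * B))) := by
          apply mul_le_mul_of_nonneg_right _ hδ
          have := support_card_le p hpdeg
          calc (p.support.card : ℝ) ≤ (((d + 1) ^ k : ℕ) : ℝ) := by exact_mod_cast this
            _ = ((d : ℝ) + 1) ^ k := by push_cast; ring
      _ = ε / (𝒞.card : ℝ) := by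
          field_simp
    done
  -- Integrability of the sandwiching sums
  have hPUint : Integrable
      (fun x => ∑ A ∈ 𝒞, Set.indicator A (fun y => MvPolynomial.eval y (pu A)) x)
      (stdGaussian d) :=
    integrable_finset_sum _ fun A hA => integrable_indicator_eval (hmeas A hA) (pu A)
  have hPDint : Integrable
      (fun x => ∑ A ∈ 𝒞, Set.indicator A (fun y => MvPolynomial.eval y (pd A)) x)
      (stdGaussian d) :=
    integrable_finset_sum _ fun A hA => integrable_indicator_eval (hmeas A hA) (pd A)
  -- sum-level estimates
  have hsum : ∀ q : Set (Fin d → ℝ) → MvPolynomial (Fin d) ℝ,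
      (∀ A ∈ 𝒞, (q A).totalDegree ≤ k) → (∀ A ∈ 𝒞, ∀ m, |(q A).coeff m| ≤ B) →
      |avg S (fun x => ∑ A ∈ 𝒞, Set.indicator A (fun y => MvPolynomial.eval y (q A)) x)
        - ∫ x, (∑ A ∈ 𝒞, Set.indicator A (fun y => MvPolynomial.eval y (q A)) x)
            ∂(stdGaussian d)| ≤ ε := by
    intro q hq1 hq2
    rw [avg_sum, integral_finset_sum _
      (fun A hA => integrable_indicator_eval (hmeas A hA) (q A)), ← Finset.sum_sub_distrib]
    calc |∑ A ∈ 𝒞, (avg S (Set.indicator A fun y => MvPolynomial.eval y (q A))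
            - ∫ x, Set.indicator A (fun y => MvPolynomial.eval y (q A)) x ∂(stdGaussian d))|
        ≤ ∑ A ∈ 𝒞, |avg S (Set.indicator A fun y => MvPolynomial.eval y (q A))
            - ∫ x, Set.indicator A (fun y => MvPolynomial.eval y (q A)) x ∂(stdGaussian d)| :=
          Finset.abs_sum_le_sum_abs _ _
      _ ≤ ∑ _A ∈ 𝒞, ε / (𝒞.card : ℝ) :=
          Finset.sum_le_sum fun A hA => hpoly A hA (q A) (hq1 A hA) (hq2 A hA)
      _ = ε := by
          rw [Finset.sum_const, nsmul_eq_mul]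
          field_simp
  have hPU := hsum pu (fun A hA => (hdeg A hA).2.1) (fun A hA => (hdeg A hA).2.2.2)
  have hPD := hsum pd (fun A hA => (hdeg A hA).1) (fun A hA => (hdeg A hA).2.2.1)
  -- f as an indicator
  have hfeq : ∀ x, f x = Set.indicator {x | f x = 1} (fun _ => (1:ℝ)) x := by
    intro x
    rcases hf01 x with h | h
    · have : x ∉ {x | f x = 1} := by simp [Set.mem_setOf_eq, h]
      rw [Set.indicator_of_notMem this, h]
    · have : x ∈ {x | f x = 1} := by simpa [Set.mem_setOf_eq] using h
      rw [Set.indicator_of_mem this, h]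
  have hsmeas : MeasurableSet {x | f x = 1} := hfmeas (measurableSet_singleton 1)
  haveI : IsProbabilityMeasure (stdGaussian d) := by
    unfold _root_.stdGaussian
    infer_instance
  have hfint : Integrable f (stdGaussian d) := by
    have h1 : Integrable (Set.indicator {x | f x = 1} (fun _ => (1:ℝ))) (stdGaussian d) :=
      (integrable_const (1:ℝ)).indicator hsmeas
    exact h1.congr (Filter.Eventually.of_forall fun x => (hfeq x).symm)
  -- identify the two probabilities
  have ha : frac S (fun x => f x = 1) = avg S f := by
    unfold frac avg cnt
    congr 1
    rw [Nat.card_eq_fintype_card, Fintype.card_subtype]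
    rw [← Finset.sum_boole]
    apply Finset.sum_congr rfl
    intro i _
    rcases hf01 (S i) with h | h <;> simp [h]
  have hb : (stdGaussian d {x | f x = 1}).toReal = ∫ x, f x ∂(stdGaussian d) := by
    rw [integral_congr_ae (Filter.Eventually.of_forall hfeq)]
    rw [integral_indicator_const (1:ℝ) hsmeas]
    simp
    rfl
  -- monotonicity of averages
  have hNpos : (0:ℝ) < (N:ℝ) := by exact_mod_cast hN
  have havgmono : ∀ g h : (Fin d → ℝ) → ℝ, (∀ x, g x ≤ h x) → avg S g ≤ avg S h := by
    intro g h hgh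
    unfold avg
    exact (div_le_div_iff_of_pos_right hNpos).mpr (Finset.sum_le_sum fun i _ => hgh (S i))
  -- the L1 error bound
  have hdiffeq : (fun x => ∑ A ∈ 𝒞, Set.indicator A
        (fun y => MvPolynomial.eval y (pu A) - MvPolynomial.eval y (pd A)) x)
      = fun x => (∑ A ∈ 𝒞, Set.indicator A (fun y => MvPolynomial.eval y (pu A)) x)
        - (∑ A ∈ 𝒞, Set.indicator A (fun y => MvPolynomial.eval y (pd A)) x) := by
    funext x
    rw [← Finset.sum_sub_distrib]
    refine Finset.sum_congr rfl fun A _ => ?_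
    by_cases hx : x ∈ A <;> simp [hx]
  have h2 : (∫ x, ((∑ A ∈ 𝒞, Set.indicator A (fun y => MvPolynomial.eval y (pu A)) x)
      - (∑ A ∈ 𝒞, Set.indicator A (fun y => MvPolynomial.eval y (pd A)) x))
      ∂(stdGaussian d)) ≤ ν := by
    rw [← hdiffeq]
    exact hL1
  rw [integral_sub hPUint hPDint] at h2
  have hfPD := integral_mono hPDint hfint fun x => (hsw x).1
  have hfPU := integral_mono hfint hPUint fun x => (hsw x).2
  have hud := havgmono _ _ fun x => (hsw x).2
  have hdd := havgmono _ _ fun x => (hsw x).1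
  have h3 := abs_le.mp hPU
  have h4 := abs_le.mp hPD
  rw [ha, hb, abs_sub_le_iff]
  constructor <;> linarith

end
end

section
/- Let d ≥ 1, k ≥ 0, B > 0, let q(z) = Σ_{i=0}^{k} c_i·z^i be a real polynomial in one variable with |c_i| ≤ B for all i, and let w ∈ ℝ^d be a unit vector. Then the polynomial x ↦ q(w·x), written in the monomial basis of real polynomials in d variables (of degree at most k), has every coefficient bounded in absolute value by (d+1)^k·(k+1)·B. -/
open Real

noncomputable section

/-- Euclidean dot product on `ℝ^d`. -/
def dotp {d : ℕ} (v w : Fin d → ℝ) : ℝ := ∑ i, v i * w i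

/-- `v` is a unit vector. -/
def IsUnitVec {d : ℕ} (v : Fin d → ℝ) : Prop := dotp v v = 1

lemma linform_pow_coeff_bound {d : ℕ} (w : Fin d → ℝ) (hw : ∀ j, |w j| ≤ 1) (i : ℕ) :
    ∀ m : Fin d →₀ ℕ,
      |MvPolynomial.coeff m ((∑ j, MvPolynomial.C (w j) * MvPolynomial.X j :
        MvPolynomial (Fin d) ℝ) ^ i)| ≤ (d : ℝ) ^ i := by
  induction i with
  | zero =>
    intro m
    simp [MvPolynomial.coeff_one]
    split_ifs <;> norm_num
  | succ i ih =>
    intro m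
    set L : MvPolynomial (Fin d) ℝ := ∑ j, MvPolynomial.C (w j) * MvPolynomial.X j with hL
    have h1 : L ^ (i + 1) = ∑ j, (MvPolynomial.C (w j) * L ^ i) * MvPolynomial.X j := by
      rw [pow_succ, hL, Finset.mul_sum]
      exact Finset.sum_congr rfl fun j _ => by ring
    rw [h1, MvPolynomial.coeff_sum]
    calc |∑ j, MvPolynomial.coeff m ((MvPolynomial.C (w j) * L ^ i) * MvPolynomial.X j)|
        ≤ ∑ j, |MvPolynomial.coeff m ((MvPolynomial.C (w j) * L ^ i) * MvPolynomial.X j)| :=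
          Finset.abs_sum_le_sum_abs _ _
      _ ≤ ∑ _j : Fin d, (d : ℝ) ^ i := by
          apply Finset.sum_le_sum
          intro j _
          rw [MvPolynomial.coeff_mul_X', MvPolynomial.coeff_C_mul]
          split_ifs with h
          · rw [abs_mul]
            calc |w j| * |MvPolynomial.coeff (m - Finsupp.single j 1) (L ^ i)|
                ≤ 1 * (d : ℝ) ^ i := by
                  apply mul_le_mul (hw j) (ih _) (abs_nonneg _) zero_le_one
              _ = (d : ℝ) ^ i := one_mul _
          · simp [pow_nonneg (by positivity : (0:ℝ) ≤ (d:ℝ))]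
      _ = (d : ℝ) ^ (i + 1) := by
          rw [Finset.sum_const, Finset.card_univ, Fintype.card_fin, nsmul_eq_mul, pow_succ]
          ring

/-- If `q` is a one-variable polynomial of degree at most `k` with coefficients bounded by `B`
and `w ∈ ℝ^d` is a unit vector, then the `d`-variable polynomial `x ↦ q(w·x)` has all its
monomial coefficients bounded by `(d+1)^k·(k+1)·B` in absolute value. -/
theorem coeff_bound_of_substituting_linear_form
    {d k : ℕ} (hd : 1 ≤ d) (B : ℝ) (hB : 0 < B)
    (q : Polynomial ℝ) (hq : q.natDegree ≤ k) (hqc : ∀ n, |q.coeff n| ≤ B)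
    (w : Fin d → ℝ) (hw : IsUnitVec w) :
    ∀ m : Fin d →₀ ℕ,
      |MvPolynomial.coeff m
          (Polynomial.aeval
            (∑ i, MvPolynomial.C (w i) * MvPolynomial.X i : MvPolynomial (Fin d) ℝ) q)|
        ≤ ((d : ℝ) + 1) ^ k * ((k : ℝ) + 1) * B := by
  intro m
  have hwj : ∀ j, |w j| ≤ 1 := by
    intro j
    have h1 : (w j) ^ 2 ≤ 1 := by
      have : ∑ i, w i * w i = 1 := hw
      calc (w j)^2 = w j * w j := sq (w j) ▸ rfl
        _ ≤ ∑ i, w i * w i := Finset.single_le_sum (fun i _ => mul_self_nonneg (w i))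
            (Finset.mem_univ j)
        _ = 1 := this
    nlinarith [abs_nonneg (w j), sq_abs (w j)]
  set L : MvPolynomial (Fin d) ℝ := ∑ j, MvPolynomial.C (w j) * MvPolynomial.X j with hL
  have hrep : Polynomial.aeval L q = ∑ i ∈ Finset.range (k + 1), q.coeff i • L ^ i :=
    Polynomial.aeval_eq_sum_range' (Nat.lt_succ_of_le hq) L
  rw [hrep, MvPolynomial.coeff_sum]
  calc |∑ i ∈ Finset.range (k + 1), MvPolynomial.coeff m (q.coeff i • L ^ i)|
      ≤ ∑ i ∈ Finset.range (k + 1), |MvPolynomial.coeff m (q.coeff i • L ^ i)| :=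
        Finset.abs_sum_le_sum_abs _ _
    _ ≤ ∑ _i ∈ Finset.range (k + 1), ((d : ℝ) + 1) ^ k * B := by
        apply Finset.sum_le_sum
        intro i hi
        rw [MvPolynomial.coeff_smul, smul_eq_mul, abs_mul]
        have h1 : |MvPolynomial.coeff m (L ^ i)| ≤ ((d : ℝ) + 1) ^ k := by
          calc |MvPolynomial.coeff m (L ^ i)| ≤ (d : ℝ) ^ i :=
                linform_pow_coeff_bound w hwj i m
            _ ≤ ((d : ℝ) + 1) ^ i := by
                apply pow_le_pow_left₀ (by positivity) (by linarith)
            _ ≤ ((d : ℝ) + 1) ^ k := by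
                apply pow_le_pow_right₀ (by linarith [Nat.cast_nonneg (α := ℝ) d])
                exact Finset.mem_range_succ_iff.mp hi
        calc |q.coeff i| * |MvPolynomial.coeff m (L ^ i)|
            ≤ B * ((d : ℝ) + 1) ^ k :=
              mul_le_mul (hqc i) h1 (abs_nonneg _) hB.le
          _ = ((d : ℝ) + 1) ^ k * B := mul_comm _ _
    _ = ((d : ℝ) + 1) ^ k * ((k : ℝ) + 1) * B := by
        rw [Finset.sum_const, Finset.card_range, nsmul_eq_mul]
        push_cast
        ring


end
end

section
/- Let d ≥ 2, let v, v' be unit vectors in ℝ^d with θ := ∠(v,v') ∈ (0, π/2), let v_⊥ := (v' − (v'·v)v)/‖v' − (v'·v)v‖, let ε > 0, and let S be a nonempty finite tuple of points of ℝ^d. Then Σ_{i=0}^{∞} Pr_{x∼S}[v·x ∈ [iε,(i+1)ε) and v_⊥·x ≤ −(i+1)ε/tan θ] ≤ Pr_{x∼S}[v·x ≥ 0 and v'·x < 0] ≤ Σ_{i=0}^{∞} Pr_{x∼S}[v·x ∈ [iε,(i+1)ε) and v_⊥·x ≤ −iε/tan θ] (all but finitely many terms of each series vanish). -/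
open Real

noncomputable section

/-- The angle `∠(v, v') = arccos (v ⬝ v')` between unit vectors. -/
def angleOf {d : ℕ} (v w : Fin d → ℝ) : ℝ := Real.arccos (dotp v w)

lemma dotp_comm {d : ℕ} (a b : Fin d → ℝ) : dotp a b = dotp b a := by
  simp only [dotp]; exact Finset.sum_congr rfl fun i _ => mul_comm _ _

lemma dotp_sub_left {d : ℕ} (a b x : Fin d → ℝ) (c : ℝ) :
    dotp (fun j => a j - c * b j) x = dotp a x - c * dotp b x := by
  simp only [dotp, sub_mul, Finset.sum_sub_distrib, Finset.mul_sum]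
  ring_nf

lemma dotp_div_left {d : ℕ} (a x : Fin d → ℝ) (s : ℝ) :
    dotp (fun j => a j / s) x = dotp a x / s := by
  simp only [dotp, div_mul_eq_mul_div, Finset.sum_div]

lemma dotp_expand {d : ℕ} (a b : Fin d → ℝ) (c : ℝ) :
    dotp (fun j => a j - c * b j) (fun j => a j - c * b j)
      = dotp a a - 2 * c * dotp a b + c ^ 2 * dotp b b := by
  rw [dotp_sub_left]
  rw [show dotp a (fun j => a j - c * b j) = dotp (fun j => a j - c * b j) a from dotp_comm _ _,
    show dotp b (fun j => a j - c * b j) = dotp (fun j => a j - c * b j) b from dotp_comm _ _,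
    dotp_sub_left, dotp_sub_left, dotp_comm b a]
  ring

lemma frac_eq {N : ℕ} {α : Type*} (S : Fin N → α) (P : α → Prop)
    [DecidablePred fun j => P (S j)] :
    frac S P = ((Finset.univ.filter fun j => P (S j)).card : ℝ) / N := by
  unfold frac cnt
  rw [Nat.card_eq_fintype_card, Fintype.card_subtype]

/-- Bucketing the region `{v·x ≥ 0 > v'·x}` between two unions of simple strip regions:
the empirical mass of the region is sandwiched between the two corresponding series
(all but finitely many terms of which vanish). -/
theorem disagreement_region_bucketing
    {d : ℕ} (hd : 2 ≤ d) (v v' : Fin d → ℝ) (hv : IsUnitVec v) (hv' : IsUnitVec v')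
    (hθ : angleOf v v' ∈ Set.Ioo (0:ℝ) (π / 2))
    (vperp : Fin d → ℝ)
    (hvperp : vperp = (fun i => (v' i - dotp v' v * v i) /
      Real.sqrt (dotp (fun j => v' j - dotp v' v * v j)
        (fun j => v' j - dotp v' v * v j))))
    (ε : ℝ) (hε : 0 < ε)
    {N : ℕ} (hN : 0 < N) (S : Fin N → (Fin d → ℝ)) :
    {i : ℕ | frac S (fun x => ((i : ℝ) * ε ≤ dotp v x ∧ dotp v x < ((i : ℝ) + 1) * ε) ∧
        dotp vperp x ≤ -(((i : ℝ) + 1) * ε) / Real.tan (angleOf v v')) ≠ 0}.Finite ∧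
    {i : ℕ | frac S (fun x => ((i : ℝ) * ε ≤ dotp v x ∧ dotp v x < ((i : ℝ) + 1) * ε) ∧
        dotp vperp x ≤ -((i : ℝ) * ε) / Real.tan (angleOf v v')) ≠ 0}.Finite ∧
    (∑' i : ℕ, frac S (fun x => ((i : ℝ) * ε ≤ dotp v x ∧ dotp v x < ((i : ℝ) + 1) * ε) ∧
        dotp vperp x ≤ -(((i : ℝ) + 1) * ε) / Real.tan (angleOf v v')))
      ≤ frac S (fun x => 0 ≤ dotp v x ∧ dotp v' x < 0) ∧
    frac S (fun x => 0 ≤ dotp v x ∧ dotp v' x < 0)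
      ≤ ∑' i : ℕ, frac S (fun x => ((i : ℝ) * ε ≤ dotp v x ∧ dotp v x < ((i : ℝ) + 1) * ε) ∧
          dotp vperp x ≤ -((i : ℝ) * ε) / Real.tan (angleOf v v')) := by
  classical
  obtain ⟨hθ0, hθ2⟩ := hθ
  have hv1 : dotp v v = 1 := hv
  have hv'1 : dotp v' v' = 1 := hv'
  set c := dotp v' v with hcdef
  have hsymm : dotp v v' = c := dotp_comm v v'
  have hc1 : c < 1 := by
    have h := hθ0
    rw [angleOf, hsymm] at h
    exact Real.arccos_pos.mp h
  have hc0 : 0 < c := by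
    have h := hθ2
    rw [angleOf, hsymm] at h
    exact Real.arccos_lt_pi_div_two.mp h
  have hcos : Real.cos (angleOf v v') = c := by
    rw [angleOf, hsymm]; exact Real.cos_arccos (by linarith) hc1.le
  set s := Real.sqrt (1 - c ^ 2) with hsdef
  have hs0 : 0 < s := Real.sqrt_pos.mpr (by nlinarith)
  have hsin : Real.sin (angleOf v v') = s := by
    rw [angleOf, hsymm, Real.sin_arccos]
  have htan : Real.tan (angleOf v v') = s / c := by
    rw [Real.tan_eq_sin_div_cos, hsin, hcos]
  have hww : dotp (fun j => v' j - c * v j) (fun j => v' j - c * v j) = 1 - c ^ 2 := by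
    rw [dotp_expand, hv'1, hv1, ← hcdef]; ring
  have hvperp' : vperp = fun j => (v' j - c * v j) / s := by
    rw [hvperp]; funext j; rw [hww, hsdef]
  have hkey : ∀ x, dotp v' x = c * dotp v x + s * dotp vperp x := by
    intro x
    have h1 : dotp vperp x = (dotp v' x - c * dotp v x) / s := by
      rw [hvperp', dotp_div_left, dotp_sub_left]
    rw [h1]; field_simp; ring
  -- counting setup
  haveI : Nonempty (Fin N) := ⟨⟨0, hN⟩⟩
  set C := Finset.univ.sup' Finset.univ_nonempty (fun j => dotp v (S j)) with hCdef
  set M := ⌊C / ε⌋₊ + 1 with hMdef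
  have hCM : ∀ j, dotp v (S j) < (M : ℝ) * ε := by
    intro j
    have h1 : dotp v (S j) ≤ C := by
      rw [hCdef]; exact Finset.le_sup' (fun j => dotp v (S j)) (Finset.mem_univ j)
    have h2 : C / ε < (M : ℝ) := by
      rw [hMdef]; push_cast; exact Nat.lt_floor_add_one _
    have h3 : C < (M : ℝ) * ε := (div_lt_iff₀ hε).mp h2
    linarith
  set A1 : ℕ → Finset (Fin N) := fun i => Finset.univ.filter (fun j =>
      (((i:ℝ) * ε ≤ dotp v (S j) ∧ dotp v (S j) < ((i:ℝ) + 1) * ε) ∧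
        dotp vperp (S j) ≤ -(((i:ℝ) + 1) * ε) / Real.tan (angleOf v v'))) with hA1
  set A2 : ℕ → Finset (Fin N) := fun i => Finset.univ.filter (fun j =>
      (((i:ℝ) * ε ≤ dotp v (S j) ∧ dotp v (S j) < ((i:ℝ) + 1) * ε) ∧
        dotp vperp (S j) ≤ -((i:ℝ) * ε) / Real.tan (angleOf v v'))) with hA2
  set T : Finset (Fin N) := Finset.univ.filter (fun j =>
      0 ≤ dotp v (S j) ∧ dotp v' (S j) < 0) with hT
  have hf1 : ∀ i : ℕ, frac S (fun x => ((i : ℝ) * ε ≤ dotp v x ∧ dotp v x < ((i : ℝ) + 1) * ε) ∧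
        dotp vperp x ≤ -(((i : ℝ) + 1) * ε) / Real.tan (angleOf v v'))
      = ((A1 i).card : ℝ) / N := fun i => frac_eq S _
  have hf2 : ∀ i : ℕ, frac S (fun x => ((i : ℝ) * ε ≤ dotp v x ∧ dotp v x < ((i : ℝ) + 1) * ε) ∧
        dotp vperp x ≤ -((i : ℝ) * ε) / Real.tan (angleOf v v'))
      = ((A2 i).card : ℝ) / N := fun i => frac_eq S _
  have hfT : frac S (fun x => 0 ≤ dotp v x ∧ dotp v' x < 0) = ((T.card : ℝ)) / N :=
    frac_eq S _
  -- emptiness beyond M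
  have hA1empty : ∀ i, M ≤ i → A1 i = ∅ := by
    intro i hi
    rw [hA1, Finset.filter_eq_empty_iff]
    rintro j - ⟨⟨h1, h2⟩, -⟩
    have h3 := hCM j
    have h4 : (M:ℝ) * ε ≤ (i:ℝ) * ε := by
      have : (M:ℝ) ≤ (i:ℝ) := by exact_mod_cast hi
      exact mul_le_mul_of_nonneg_right this hε.le
    linarith
  have hA2empty : ∀ i, M ≤ i → A2 i = ∅ := by
    intro i hi
    rw [hA2, Finset.filter_eq_empty_iff]
    rintro j - ⟨⟨h1, h2⟩, -⟩
    have h3 := hCM j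
    have h4 : (M:ℝ) * ε ≤ (i:ℝ) * ε := by
      have : (M:ℝ) ≤ (i:ℝ) := by exact_mod_cast hi
      exact mul_le_mul_of_nonneg_right this hε.le
    linarith
  have hz1 : ∀ i ∉ Finset.range M, frac S (fun x =>
      ((i : ℝ) * ε ≤ dotp v x ∧ dotp v x < ((i : ℝ) + 1) * ε) ∧
        dotp vperp x ≤ -(((i : ℝ) + 1) * ε) / Real.tan (angleOf v v')) = 0 := by
    intro i hi
    rw [hf1 i, hA1empty i (by simpa using hi)]
    simp
  have hz2 : ∀ i ∉ Finset.range M, frac S (fun x =>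
      ((i : ℝ) * ε ≤ dotp v x ∧ dotp v x < ((i : ℝ) + 1) * ε) ∧
        dotp vperp x ≤ -((i : ℝ) * ε) / Real.tan (angleOf v v')) = 0 := by
    intro i hi
    rw [hf2 i, hA2empty i (by simpa using hi)]
    simp
  -- disjointness
  have hdisj : ∀ (i i' : ℕ), i ≠ i' → ∀ (j : Fin N),
      ((i:ℝ) * ε ≤ dotp v (S j) ∧ dotp v (S j) < ((i:ℝ) + 1) * ε) →
      ((i':ℝ) * ε ≤ dotp v (S j) ∧ dotp v (S j) < ((i':ℝ) + 1) * ε) → False := by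
    intro i i' hne j ⟨h1, h2⟩ ⟨h3, h4⟩
    rcases Nat.lt_or_ge i i' with h | h
    · have : ((i:ℝ) + 1) ≤ (i':ℝ) := by exact_mod_cast h
      nlinarith
    · have h' : i' < i := lt_of_le_of_ne h (Ne.symm hne)
      have : ((i':ℝ) + 1) ≤ (i:ℝ) := by exact_mod_cast h'
      nlinarith
  have hdisj1 : ∀ i ∈ Finset.range M, ∀ i' ∈ Finset.range M, i ≠ i' →
      Disjoint (A1 i) (A1 i') := by
    intro i _ i' _ hne
    rw [Finset.disjoint_left]
    intro j hj hj'
    rw [hA1, Finset.mem_filter] at hj hj'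
    exact hdisj i i' hne j hj.2.1 hj'.2.1
  -- lower bound: A1 i ⊆ T
  have hsub1 : ∀ i, A1 i ⊆ T := by
    intro i j hj
    rw [hA1, Finset.mem_filter] at hj
    obtain ⟨-, ⟨h1, h2⟩, h3⟩ := hj
    rw [hT, Finset.mem_filter]
    refine ⟨Finset.mem_univ _, ?_, ?_⟩
    · have : (0:ℝ) ≤ (i:ℝ) * ε := by positivity
      linarith
    · rw [htan, div_div_eq_mul_div] at h3
      have h3' : dotp vperp (S j) * s ≤ -(((i:ℝ) + 1) * ε) * c := (le_div_iff₀ hs0).mp h3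
      have hk := hkey (S j)
      have h5 := mul_lt_mul_of_pos_left h2 hc0
      linarith [mul_comm s (dotp vperp (S j))]
  have hcard1 : (∑ i ∈ Finset.range M, (A1 i).card) ≤ T.card := by
    rw [← Finset.card_biUnion hdisj1]
    exact Finset.card_le_card (Finset.biUnion_subset.mpr fun i _ => hsub1 i)
  -- upper bound: T ⊆ biUnion A2
  have hsub2 : T ⊆ (Finset.range M).biUnion A2 := by
    intro j hj
    rw [hT, Finset.mem_filter] at hj
    obtain ⟨-, h0, h1⟩ := hj
    have hxnn : 0 ≤ dotp v (S j) / ε := div_nonneg h0 hε.le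
    set i := ⌊dotp v (S j) / ε⌋₊ with hidef
    have hi1 : (i:ℝ) * ε ≤ dotp v (S j) := by
      have h := Nat.floor_le hxnn
      rw [le_div_iff₀ hε] at h
      exact h
    have hi2 : dotp v (S j) < ((i:ℝ) + 1) * ε := by
      have h := Nat.lt_floor_add_one (dotp v (S j) / ε)
      rw [div_lt_iff₀ hε] at h
      exact_mod_cast h
    have hiM : i < M := by
      have hC : dotp v (S j) ≤ C := by
        rw [hCdef]; exact Finset.le_sup' (fun j => dotp v (S j)) (Finset.mem_univ j)
      have : dotp v (S j) / ε ≤ C / ε := by gcongr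
      calc i ≤ ⌊C / ε⌋₊ := Nat.floor_le_floor this
        _ < M := by rw [hMdef]; omega
    refine Finset.mem_biUnion.mpr ⟨i, Finset.mem_range.mpr hiM, ?_⟩
    rw [hA2, Finset.mem_filter]
    refine ⟨Finset.mem_univ _, ⟨hi1, hi2⟩, ?_⟩
    rw [htan, div_div_eq_mul_div, le_div_iff₀ hs0]
    have hk := hkey (S j)
    have h5 := mul_le_mul_of_nonneg_left hi1 hc0.le
    linarith [mul_comm s (dotp vperp (S j))]
  have hcard2 : T.card ≤ ∑ i ∈ Finset.range M, (A2 i).card :=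
    le_trans (Finset.card_le_card hsub2) (Finset.card_biUnion_le)
  -- assemble
  refine ⟨?_, ?_, ?_, ?_⟩
  · apply Set.Finite.subset (Finset.range M).finite_toSet
    intro i hi
    simp only [Set.mem_setOf_eq] at hi
    by_contra hmem
    exact hi (hz1 i (by simpa using hmem))
  · apply Set.Finite.subset (Finset.range M).finite_toSet
    intro i hi
    simp only [Set.mem_setOf_eq] at hi
    by_contra hmem
    exact hi (hz2 i (by simpa using hmem))
  · rw [tsum_eq_sum hz1, hfT]
    calc ∑ i ∈ Finset.range M, frac S (fun x =>
          ((i : ℝ) * ε ≤ dotp v x ∧ dotp v x < ((i : ℝ) + 1) * ε) ∧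
            dotp vperp x ≤ -(((i : ℝ) + 1) * ε) / Real.tan (angleOf v v'))
        = (∑ i ∈ Finset.range M, ((A1 i).card : ℝ)) / N := by
          rw [Finset.sum_div]; exact Finset.sum_congr rfl fun i _ => hf1 i
      _ ≤ ((T.card : ℝ)) / N := by
          gcongr
          exact_mod_cast hcard1
  · rw [tsum_eq_sum hz2, hfT]
    calc ((T.card : ℝ)) / N
        ≤ (∑ i ∈ Finset.range M, ((A2 i).card : ℝ)) / N := by
          gcongr
          exact_mod_cast hcard2
      _ = ∑ i ∈ Finset.range M, frac S (fun x =>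
          ((i : ℝ) * ε ≤ dotp v x ∧ dotp v x < ((i : ℝ) + 1) * ε) ∧
            dotp vperp x ≤ -((i : ℝ) * ε) / Real.tan (angleOf v v')) := by
          rw [Finset.sum_div]; exact (Finset.sum_congr rfl fun i _ => (hf2 i).symm)
end
end
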